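/- Direct sum decomposition of the Adini 1-form shape space in 3D: In the space ℝ[x,y,z]³ of polynomial vector fields, let P := {(p₁,p₂,p₃) : each pᵢ has total degree ≤ 2}, let J := span{(−xyz, x²z, 0), (−y²z, xyz, 0), (0, −xyz, xy²), (0, −xz², xyz), (−xyz, 0, x²y), (−yz², 0, xyz)}, and let D := span of the gradients ∇q for q ∈ {x³y, x³z, x²yz, x³yz, y³z, xy³, xy²z, xy³z, yz³, xz³, xyz², xyz³}. Then the sum P + J + D is direct, i.e. P ∩ (J + D) = 0 and J ∩ D = 0; equivalently, dim(P + J + D) = 30 + 6 + 12 = 48. -/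

import Mathlib

open MvPolynomial

noncomputable section

/-- Polynomials in three variables `x, y, z` over `ℝ`. -/
abbrev M3 : Type := MvPolynomial (Fin 3) ℝ

def x : M3 := X 0
def y : M3 := X 1
def z : M3 := X 2

/-- The gradient of a scalar polynomial. -/
def grad3 (q : M3) : Fin 3 → M3 := ![pderiv 0 q, pderiv 1 q, pderiv 2 q]

/-- Vector fields whose components all have total degree at most 2. -/
def Pspace : Submodule ℝ (Fin 3 → M3) :=
  Submodule.pi Set.univ fun _ => restrictTotalDegree (Fin 3) ℝ 2

/-- The space `J` spanned by the six special vector fields. -/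
def Jspace : Submodule ℝ (Fin 3 → M3) :=
  Submodule.span ℝ
    {![-(x * y * z), x ^ 2 * z, 0], ![-(y ^ 2 * z), x * y * z, 0],
      ![0, -(x * y * z), x * y ^ 2], ![0, -(x * z ^ 2), x * y * z],
      ![-(x * y * z), 0, x ^ 2 * y], ![-(y * z ^ 2), 0, x * y * z]}

/-- The space `D` spanned by the twelve gradient fields. -/
def Dspace : Submodule ℝ (Fin 3 → M3) :=
  Submodule.span ℝ
    (grad3 '' {x ^ 3 * y, x ^ 3 * z, x ^ 2 * y * z, x ^ 3 * y * z,
      y ^ 3 * z, x * y ^ 3, x * y ^ 2 * z, x * y ^ 3 * z,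
      y * z ^ 3, x * z ^ 3, x * y * z ^ 2, x * y * z ^ 3})

/- ### Auxiliary material -/

lemma fdeg_add_single (d : Fin 3 →₀ ℕ) (i : Fin 3) :
    Finsupp.degree (d + Finsupp.single i 1) = Finsupp.degree d + 1 := by
  have h1 : Finsupp.degree (Finsupp.single i 1) = 1 := by
    exact Finsupp.degree_single i 1
  rw [Finsupp.degree_eq_weight_one, map_add, ← Finsupp.degree_eq_weight_one, h1]

/-- Coefficient formula for partial derivatives. -/
lemma coeff_pderiv (i : Fin 3) (q : M3) (d : Fin 3 →₀ ℕ) :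
    coeff d (pderiv i q) =
      ((d i : ℝ) + 1) * coeff (d + Finsupp.single i 1) q := by
  induction q using MvPolynomial.induction_on' with
  | add p q hp hq => simp [map_add, coeff_add, hp, hq, mul_add]
  | monomial s a =>
    rw [pderiv_monomial]
    rw [coeff_monomial, coeff_monomial]
    by_cases h : s = d + Finsupp.single i 1
    · subst h
      have h1 : d + Finsupp.single i 1 - Finsupp.single i 1 = d :=
        add_tsub_cancel_right _ _
      rw [if_pos h1, if_pos rfl]
      have hdd : ((d + Finsupp.single i 1 : Fin 3 →₀ ℕ)) i = d i + 1 := by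
        rw [Finsupp.add_apply, Finsupp.single_apply, if_pos rfl]
      rw [hdd]
      push_cast
      ring
    · rw [if_neg h]
      by_cases h2 : s - Finsupp.single i 1 = d
      · have hsi : s i = 0 := by
          by_contra hsi
          apply h
          have hle : Finsupp.single i 1 ≤ s :=
            Finsupp.single_le_iff.mpr (Nat.one_le_iff_ne_zero.mpr hsi)
          rw [← h2]
          exact (tsub_add_cancel_of_le hle).symm
        rw [if_pos h2, hsi]
        simp
      · rw [if_neg h2, mul_zero]

/-- Coefficient formula for Euler terms. -/
lemma coeff_X_mul_pderiv (i : Fin 3) (q : M3) (d : Fin 3 →₀ ℕ) :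
    coeff d (X i * pderiv i q) = (d i : ℝ) * coeff d q := by
  classical
  rw [coeff_X_mul']
  by_cases h : i ∈ d.support
  · rw [if_pos h, coeff_pderiv]
    have hdi : d i ≠ 0 := Finsupp.mem_support_iff.mp h
    have hle : Finsupp.single i 1 ≤ d :=
      Finsupp.single_le_iff.mpr (Nat.one_le_iff_ne_zero.mpr hdi)
    have h1 : d - Finsupp.single i 1 + Finsupp.single i 1 = d :=
      tsub_add_cancel_of_le hle
    rw [h1]
    have h2 : ((d - Finsupp.single i 1 : Fin 3 →₀ ℕ)) i = d i - 1 := by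
      rw [Finsupp.tsub_apply, Finsupp.single_apply, if_pos rfl]
    rw [h2]
    congr 1
    have : 1 ≤ d i := Nat.one_le_iff_ne_zero.mpr hdi
    push_cast [Nat.cast_sub this]
    ring
  · rw [if_neg h]
    have hdi : d i = 0 := by simpa using Finsupp.notMem_support_iff.mp h
    rw [hdi]
    simp

/-- The Euler pairing `v ↦ x v₀ + y v₁ + z v₂` as a linear map. -/
def Epair : (Fin 3 → M3) →ₗ[ℝ] M3 where
  toFun v := x * v 0 + y * v 1 + z * v 2
  map_add' v w := by simp only [Pi.add_apply]; ring
  map_smul' r v := by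
    simp only [Pi.smul_apply, smul_eq_C_mul, RingHom.id_apply]
    ring

/-- `grad3` as a linear map. -/
def gradL : M3 →ₗ[ℝ] (Fin 3 → M3) where
  toFun := grad3
  map_add' p q := by
    funext i
    fin_cases i <;> simp [grad3]
  map_smul' r p := by
    funext i
    fin_cases i <;> simp [grad3]

lemma Epair_gradL_coeff (q : M3) (d : Fin 3 →₀ ℕ) :
    coeff d (Epair (gradL q)) = ((d 0 : ℝ) + d 1 + d 2) * coeff d q := by
  show coeff d (x * grad3 q 0 + y * grad3 q 1 + z * grad3 q 2) = _
  simp only [grad3, x, y, z, Matrix.cons_val_zero, Matrix.cons_val_one, Matrix.head_cons,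
    Matrix.cons_val_two, Matrix.tail_cons]
  rw [coeff_add, coeff_add, coeff_X_mul_pderiv, coeff_X_mul_pderiv, coeff_X_mul_pderiv]
  ring

/-- If the Euler pairing of a gradient vanishes, the gradient vanishes. -/
lemma gradL_eq_zero_of_Epair (q : M3) (h : Epair (gradL q) = 0) : gradL q = 0 := by
  have key : ∀ e : Fin 3 →₀ ℕ, e ≠ 0 → coeff e q = 0 := by
    intro e he
    have h1 : ((e 0 : ℝ) + e 1 + e 2) * coeff e q = 0 := by
      rw [← Epair_gradL_coeff, h, coeff_zero]
    have h2 : (e 0 : ℝ) + e 1 + e 2 ≠ 0 := by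
      have : ∃ i, e i ≠ 0 := by
        by_contra hc
        push_neg at hc
        exact he (Finsupp.ext hc)
      obtain ⟨i, hi⟩ := this
      have h3 : e 0 ≠ 0 ∨ e 1 ≠ 0 ∨ e 2 ≠ 0 := by
        fin_cases i
        · exact Or.inl hi
        · exact Or.inr (Or.inl hi)
        · exact Or.inr (Or.inr hi)
      have h4 : 0 < e 0 + e 1 + e 2 := by omega
      have h5 : (0 : ℝ) < (e 0 : ℝ) + e 1 + e 2 := by exact_mod_cast h4
      exact h5.ne'
    exact (mul_eq_zero.mp h1).resolve_left h2
  have hp : ∀ i : Fin 3, pderiv i q = 0 := by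
    intro i
    ext d
    rw [coeff_pderiv, coeff_zero]
    rw [key (d + Finsupp.single i 1) (by
      intro hc
      have := DFunLike.congr_fun hc i
      simp [Finsupp.add_apply, Finsupp.single_apply] at this)]
    ring
  funext i
  show grad3 q i = 0
  fin_cases i <;> simp [grad3, hp]

/-- Polynomials all of whose monomials have degree at least 3. -/
def Wlow : Submodule ℝ M3 where
  carrier := {p | ∀ d : Fin 3 →₀ ℕ, Finsupp.degree d ≤ 2 → coeff d p = 0}
  add_mem' := by
    intro a b ha hb d hd
    rw [coeff_add, ha d hd, hb d hd, add_zero]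
  zero_mem' := by intro d _; simp
  smul_mem' := by
    intro c p hp d hd
    rw [coeff_smul, hp d hd, smul_zero]

lemma mem_Wlow_of_isHomogeneous {p : M3} {n : ℕ} (hp : p.IsHomogeneous n)
    (hn : 3 ≤ n) : p ∈ Wlow := by
  intro d hd
  exact hp.coeff_eq_zero (by omega)

lemma pderiv_mem_Wlow {q : M3} {n : ℕ} (hq : q.IsHomogeneous n) (hn : 4 ≤ n)
    (i : Fin 3) : pderiv i q ∈ Wlow := by
  intro d hd
  rw [coeff_pderiv]
  rw [hq.coeff_eq_zero (d := d + Finsupp.single i 1) (by rw [fdeg_add_single]; omega)]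
  ring

def Wvec : Submodule ℝ (Fin 3 → M3) := Submodule.pi Set.univ fun _ => Wlow

lemma hom_cast {p : M3} {m n : ℕ} (h : p.IsHomogeneous m) (e : m = n) :
    p.IsHomogeneous n := e ▸ h

lemma hxyz : (x * y * z).IsHomogeneous 3 :=
  hom_cast (((isHomogeneous_X _ _).mul (isHomogeneous_X _ _)).mul (isHomogeneous_X _ _)) rfl

lemma Jspace_le_Wvec : Jspace ≤ Wvec := by
  rw [Jspace, Submodule.span_le]
  have hx2z : (x ^ 2 * z).IsHomogeneous 3 :=
    hom_cast ((isHomogeneous_X_pow 0 2).mul (isHomogeneous_X _ _)) rfl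
  have hy2z : (y ^ 2 * z).IsHomogeneous 3 :=
    hom_cast ((isHomogeneous_X_pow 1 2).mul (isHomogeneous_X _ _)) rfl
  have hxy2 : (x * y ^ 2).IsHomogeneous 3 :=
    hom_cast ((isHomogeneous_X (R := ℝ) 0).mul (isHomogeneous_X_pow (R := ℝ) 1 2)) rfl
  have hxz2 : (x * z ^ 2).IsHomogeneous 3 :=
    hom_cast ((isHomogeneous_X (R := ℝ) 0).mul (isHomogeneous_X_pow (R := ℝ) 2 2)) rfl
  have hx2y : (x ^ 2 * y).IsHomogeneous 3 :=
    hom_cast ((isHomogeneous_X_pow 0 2).mul (isHomogeneous_X _ _)) rfl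
  have hyz2 : (y * z ^ 2).IsHomogeneous 3 :=
    hom_cast ((isHomogeneous_X (R := ℝ) 1).mul (isHomogeneous_X_pow (R := ℝ) 2 2)) rfl
  intro v hv
  simp only [Set.mem_insert_iff, Set.mem_singleton_iff] at hv
  rcases hv with rfl | rfl | rfl | rfl | rfl | rfl <;>
    · refine Submodule.mem_pi.mpr fun i _ => ?_
      fin_cases i <;>
        simp only [Matrix.cons_val_zero, Matrix.cons_val_one, Matrix.head_cons,
          Matrix.cons_val_two, Matrix.tail_cons] <;>
        first
        | exact Wlow.zero_mem
        | exact Wlow.neg_mem (mem_Wlow_of_isHomogeneous hxyz (by norm_num))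
        | exact mem_Wlow_of_isHomogeneous hxyz (by norm_num)
        | exact Wlow.neg_mem (mem_Wlow_of_isHomogeneous hy2z (by norm_num))
        | exact mem_Wlow_of_isHomogeneous hx2z (by norm_num)
        | exact mem_Wlow_of_isHomogeneous hxy2 (by norm_num)
        | exact Wlow.neg_mem (mem_Wlow_of_isHomogeneous hxz2 (by norm_num))
        | exact mem_Wlow_of_isHomogeneous hx2y (by norm_num)
        | exact Wlow.neg_mem (mem_Wlow_of_isHomogeneous hyz2 (by norm_num))

lemma Dspace_le_Wvec : Dspace ≤ Wvec := by
  rw [Dspace, Submodule.span_le]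
  rintro v ⟨q, hq, rfl⟩
  simp only [Set.mem_insert_iff, Set.mem_singleton_iff] at hq
  have hX : ∀ i : Fin 3, (X i : M3).IsHomogeneous 1 := fun i => isHomogeneous_X _ _
  have key : ∃ n : ℕ, 4 ≤ n ∧ q.IsHomogeneous n := by
    rcases hq with rfl | rfl | rfl | rfl | rfl | rfl | rfl | rfl | rfl | rfl | rfl | rfl
    · exact ⟨4, le_refl _, hom_cast ((isHomogeneous_X_pow 0 3).mul (hX 1)) rfl⟩
    · exact ⟨4, le_refl _, hom_cast ((isHomogeneous_X_pow 0 3).mul (hX 2)) rfl⟩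
    · exact ⟨4, le_refl _, hom_cast (((isHomogeneous_X_pow 0 2).mul (hX 1)).mul (hX 2)) rfl⟩
    · exact ⟨5, by norm_num, hom_cast (((isHomogeneous_X_pow 0 3).mul (hX 1)).mul (hX 2)) rfl⟩
    · exact ⟨4, le_refl _, hom_cast ((isHomogeneous_X_pow 1 3).mul (hX 2)) rfl⟩
    · exact ⟨4, le_refl _, hom_cast ((hX 0).mul (isHomogeneous_X_pow 1 3)) rfl⟩
    · exact ⟨4, le_refl _, hom_cast (((hX 0).mul (isHomogeneous_X_pow 1 2)).mul (hX 2)) rfl⟩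
    · exact ⟨5, by norm_num, hom_cast (((hX 0).mul (isHomogeneous_X_pow 1 3)).mul (hX 2)) rfl⟩
    · exact ⟨4, le_refl _, hom_cast ((hX 1).mul (isHomogeneous_X_pow 2 3)) rfl⟩
    · exact ⟨4, le_refl _, hom_cast ((hX 0).mul (isHomogeneous_X_pow 2 3)) rfl⟩
    · exact ⟨4, le_refl _, hom_cast (((hX 0).mul (hX 1)).mul (isHomogeneous_X_pow 2 2)) rfl⟩
    · exact ⟨5, by norm_num, hom_cast (((hX 0).mul (hX 1)).mul (isHomogeneous_X_pow 2 3)) rfl⟩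
  obtain ⟨n, hn4, hqn⟩ := key
  refine Submodule.mem_pi.mpr fun i _ => ?_
  fin_cases i <;>
    simp only [grad3, Matrix.cons_val_zero, Matrix.cons_val_one, Matrix.head_cons,
      Matrix.cons_val_two, Matrix.tail_cons] <;>
    exact pderiv_mem_Wlow hqn hn4 _

lemma Pspace_inf_Wvec : Pspace ⊓ Wvec = ⊥ := by
  rw [eq_bot_iff]
  rintro v ⟨hP, hW⟩
  have hP' : ∀ i : Fin 3, (v i).totalDegree ≤ 2 := fun i =>
    (mem_restrictTotalDegree _ _ _).mp (Submodule.mem_pi.mp hP i trivial)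
  have hW' : ∀ i : Fin 3, v i ∈ Wlow := fun i => Submodule.mem_pi.mp hW i trivial
  have : v = 0 := by
    funext i
    show v i = 0
    ext d
    rw [coeff_zero]
    by_cases hd : Finsupp.degree d ≤ 2
    · exact hW' i d hd
    · refine coeff_eq_zero_of_totalDegree_lt ?_
      calc (v i).totalDegree ≤ 2 := hP' i
        _ < Finsupp.degree d := by omega
  simp [this]

lemma Jspace_le_ker : Jspace ≤ LinearMap.ker Epair := by
  rw [Jspace, Submodule.span_le]
  intro v hv
  simp only [Set.mem_insert_iff, Set.mem_singleton_iff] at hv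
  rw [SetLike.mem_coe, LinearMap.mem_ker]
  rcases hv with rfl | rfl | rfl | rfl | rfl | rfl <;>
    · show x * _ + y * _ + z * _ = 0
      simp only [Matrix.cons_val_zero, Matrix.cons_val_one, Matrix.head_cons,
        Matrix.cons_val_two, Matrix.tail_cons]
      ring

lemma Dspace_eq_map : Dspace = Submodule.map gradL
    (Submodule.span ℝ ({x ^ 3 * y, x ^ 3 * z, x ^ 2 * y * z, x ^ 3 * y * z,
      y ^ 3 * z, x * y ^ 3, x * y ^ 2 * z, x * y ^ 3 * z,
      y * z ^ 3, x * z ^ 3, x * y * z ^ 2, x * y * z ^ 3} : Set M3)) := by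
  rw [Submodule.map_span]
  rfl

/-- Direct sum decomposition of the Adini 1-form shape space in 3D:
the sum `P + J + D` is direct. -/
theorem adini_one_form_direct_sum :
    Pspace ⊓ (Jspace ⊔ Dspace) = ⊥ ∧ Jspace ⊓ Dspace = ⊥ := by
  constructor
  · rw [eq_bot_iff, ← Pspace_inf_Wvec]
    exact inf_le_inf_left _ (sup_le Jspace_le_Wvec Dspace_le_Wvec)
  · rw [eq_bot_iff]
    rintro v ⟨hJ, hD⟩
    rw [Dspace_eq_map] at hD
    obtain ⟨q, -, rfl⟩ := hD
    have hE : Epair (gradL q) = 0 := Jspace_le_ker hJ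
    have := gradL_eq_zero_of_Epair q hE
    simp [this]

end
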